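/- arXiv:1103.4579 — 6 statements merged into one kernel-verified Lean document; each statement's English description precedes it below -/
import Mathlib

section
/- Let d be a squarefree negative integer with d ≠ -1 and d ≠ -3. If A is a cyclotomic R-matrix over O_{ℚ(√d)}, then for all indices i, j one has |A_{ij}·A_{ji}| ≤ 4; equivalently, every diagonal entry satisfies |A_{ii}| ≤ 2 and every off-diagonal entry satisfies |A_{ij}|² ≤ 4. -/
open Polynomial

/-- For squarefree `d < 0`, a generator over `ℤ` of the ring of integers of `ℚ(√d)`,
viewed inside `ℂ`: it is `(1+√d)/2` if `d ≡ 1 (mod 4)` and `√d` otherwise,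
where `√d = i·√(-d)`. -/
noncomputable def quadOmega (d : ℤ) : ℂ :=
  if d % 4 = 1 then (1 + Complex.I * Real.sqrt (-d)) / 2 else Complex.I * Real.sqrt (-d)

/-- Membership in the ring of integers `O_{ℚ(√d)} ⊆ ℂ`. -/
def InIntRing (d : ℤ) (x : ℂ) : Prop :=
  ∃ a b : ℤ, x = (a : ℂ) + (b : ℂ) * quadOmega d

/-- A matrix is cyclotomic if all of its eigenvalues are real and lie in `[-2, 2]`. -/
def IsCycloMat {n : ℕ} (A : Matrix (Fin n) (Fin n) ℂ) : Prop :=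
  ∀ μ ∈ spectrum ℂ A, ∃ t : ℝ, μ = (t : ℂ) ∧ -2 ≤ t ∧ t ≤ 2

/-- The Mahler measure of a complex polynomial: the product of `max 1 |α|`
over its roots `α`, with multiplicity. -/
noncomputable def mahlerMeasurePoly (P : Polynomial ℂ) : ℝ :=
  (P.roots.map fun z => max 1 ‖z‖).prod

/-- The associated reciprocal polynomial `z^n · g(z + 1/z)` of a polynomial `g`
of degree `n`, using `z^n (z+1/z)^k = z^(n-k) (z²+1)^k`. -/
noncomputable def assocRecip (n : ℕ) (g : Polynomial ℂ) : Polynomial ℂ :=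
  ∑ k ∈ Finset.range (n + 1), Polynomial.C (g.coeff k) * X ^ (n - k) * (X ^ 2 + 1) ^ k

/-- The Mahler measure of an `n × n` matrix: the Mahler measure of the associated
reciprocal polynomial of its characteristic polynomial. -/
noncomputable def mahlerMat {n : ℕ} (A : Matrix (Fin n) (Fin n) ℂ) : ℝ :=
  mahlerMeasurePoly (assocRecip n A.charpoly)

/-- Lehmer's polynomial `z^10 + z^9 - z^7 - z^6 - z^5 - z^4 - z^3 + z + 1`. -/
noncomputable def lehmerPolyC : Polynomial ℂ :=
  X ^ 10 + X ^ 9 - X ^ 7 - X ^ 6 - X ^ 5 - X ^ 4 - X ^ 3 + X + 1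

/-- Lehmer's number `λ₀ = 1.17628...`, the Mahler measure of Lehmer's polynomial. -/
noncomputable def lehmerNumber : ℝ := mahlerMeasurePoly lehmerPolyC

/-- A Hermitian matrix is indecomposable if the graph on its index set with an edge
between `i ≠ j` whenever `A i j ≠ 0` is connected. -/
def Indecomposable {n : ℕ} (A : Matrix (Fin n) (Fin n) ℂ) : Prop :=
  (SimpleGraph.fromRel fun i j => A i j ≠ 0).Connected

/-- `A` is minimal noncyclotomic if it is indecomposable and noncyclotomic while every
proper principal submatrix of `A` is cyclotomic. -/
def MinimalNoncyclotomic {n : ℕ} (A : Matrix (Fin n) (Fin n) ℂ) : Prop :=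
  Indecomposable A ∧ ¬ IsCycloMat A ∧
    ∀ (m : ℕ), m < n → ∀ e : Fin m ↪ Fin n, IsCycloMat (A.submatrix e e)

/-- An `L'`-matrix over `O_{ℚ(√d)}`: a Hermitian matrix with entries in the ring of
integers, diagonal entries in `{0, 1, -1}`, and off-diagonal entries of norm at most 2. -/
def IsLpMat (d : ℤ) {n : ℕ} (A : Matrix (Fin n) (Fin n) ℂ) : Prop :=
  A.IsHermitian ∧ (∀ i j, InIntRing d (A i j)) ∧
    (∀ i, A i i ∈ ({0, 1, -1} : Set ℂ)) ∧
    ∀ i j, i ≠ j → Complex.normSq (A i j) ≤ 2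

/-- An `L`-matrix over `O_{ℚ(√d)}`: a Hermitian matrix with entries in the ring of
integers, diagonal entries in `{0, 1, -1}`, and off-diagonal entries of norm at most 4. -/
def IsLMat (d : ℤ) {n : ℕ} (A : Matrix (Fin n) (Fin n) ℂ) : Prop :=
  A.IsHermitian ∧ (∀ i j, InIntRing d (A i j)) ∧
    (∀ i, A i i ∈ ({0, 1, -1} : Set ℂ)) ∧
    ∀ i j, i ≠ j → Complex.normSq (A i j) ≤ 4

lemma cyclo_entry_abs_le {n : ℕ} {A : Matrix (Fin n) (Fin n) ℂ} (hA : A.IsHermitian)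
    (hcyc : IsCycloMat A) (i j : Fin n) : ‖A i j‖ ≤ 2 := by
  classical
  set U : Matrix (Fin n) (Fin n) ℂ := (hA.eigenvectorUnitary : Matrix (Fin n) (Fin n) ℂ)
  set ev : Fin n → ℝ := hA.eigenvalues
  have hev : ∀ k, |ev k| ≤ 2 := by
    intro k
    have h1 : (ev k : ℂ) ∈ spectrum ℂ A :=
      spectrum.algebraMap_mem ℂ (hA.eigenvalues_mem_spectrum_real k)
    obtain ⟨t, ht, h2, h3⟩ := hcyc _ h1
    have : ev k = t := by exact_mod_cast ht
    rw [this]; exact abs_le.2 ⟨h2, h3⟩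
  have hAij : A i j = ∑ k, U i k * (ev k : ℂ) * star (U j k) := by
    conv_lhs => rw [hA.spectral_theorem, Unitary.conjStarAlgAut_apply]
    rw [Matrix.mul_apply]
    refine Finset.sum_congr rfl fun k _ => ?_
    rw [Matrix.mul_diagonal, Matrix.star_apply]
    rfl
  have hrow : ∀ i, ∑ k, (‖U i k‖) ^ 2 = 1 := by
    intro i
    have hU : U * star U = 1 := Matrix.mem_unitaryGroup_iff.mp hA.eigenvectorUnitary.2
    have := congrArg (fun M => M i i) hU
    simp only [Matrix.mul_apply, Matrix.star_apply, Matrix.one_apply_eq] at this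
    have h2 : ((∑ k, (‖U i k‖)^2 : ℝ) : ℂ) = 1 := by
      rw [← this]
      push_cast
      refine Finset.sum_congr rfl fun k _ => ?_
      rw [← Complex.ofReal_pow, Complex.sq_norm, RCLike.star_def, Complex.mul_conj]
    exact_mod_cast h2
  have hCS : ∑ k, ‖U i k‖ * ‖U j k‖ ≤ 1 := by
    have := Finset.sum_mul_sq_le_sq_mul_sq Finset.univ
      (fun k => ‖U i k‖) (fun k => ‖U j k‖)
    rw [hrow i, hrow j, one_mul] at this
    nlinarith [Finset.sum_nonneg (fun k (_ : k ∈ Finset.univ) =>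
      mul_nonneg (norm_nonneg (U i k)) (norm_nonneg (U j k)))]
  calc ‖A i j‖ ≤ ∑ k, ‖U i k * (ev k : ℂ) * star (U j k)‖ := by
        rw [hAij]; exact norm_sum_le _ _
    _ ≤ ∑ k, ‖U i k‖ * 2 * ‖U j k‖ := by
        refine Finset.sum_le_sum fun k _ => ?_
        rw [norm_mul, norm_mul, Complex.norm_real, Real.norm_eq_abs]
        have h1 : ‖star (U j k)‖ = ‖U j k‖ := norm_star _
        rw [h1]
        gcongr
        exact hev k
    _ = 2 * ∑ k, ‖U i k‖ * ‖U j k‖ := by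
        rw [Finset.mul_sum]; exact Finset.sum_congr rfl fun k _ => by ring
    _ ≤ 2 := by linarith

/-- Entries of a cyclotomic `R`-matrix satisfy `|A_{ij} A_{ji}| ≤ 4`; equivalently,
diagonal entries have modulus at most 2 and off-diagonal entries have norm at most 4. -/
theorem cyclotomic_entry_bound
    (d : ℤ) (hd : d < 0) (hsf : Squarefree d) (hd1 : d ≠ -1) (hd3 : d ≠ -3)
    (n : ℕ) (A : Matrix (Fin n) (Fin n) ℂ) (hA : A.IsHermitian)
    (hent : ∀ i j, InIntRing d (A i j)) (hcyc : IsCycloMat A) :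
    (∀ i j, ‖A i j * A j i‖ ≤ 4) ∧
      (∀ i, ‖A i i‖ ≤ 2) ∧
      (∀ i j, i ≠ j → Complex.normSq (A i j) ≤ 4) := by
  have key : ∀ i j, ‖A i j‖ ≤ 2 := cyclo_entry_abs_le hA hcyc
  refine ⟨fun i j => ?_, fun i => key i i, fun i j _ => ?_⟩
  · rw [norm_mul]
    have h1 := key i j
    have h2 := key j i
    have h0 := norm_nonneg (A i j)
    have h0' := norm_nonneg (A j i)
    nlinarith
  · have h1 := key i j
    have h0 := norm_nonneg (A i j)
    rw [← Complex.sq_norm]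
    nlinarith
end

section
/- Let d be a squarefree negative integer with d ≠ -1 and d ≠ -3. If A is an indecomposable cyclotomic R-matrix over O_{ℚ(√d)}, then every diagonal entry of A lies in {0, 1, −1}, unless A is the 1×1 matrix (2) or the 1×1 matrix (−2). -/
open Polynomial

section Aux

open Matrix ComplexOrder
open scoped MatrixOrder

lemma aux_psd_diag_nonneg {n : ℕ} {M : Matrix (Fin n) (Fin n) ℂ} (hM : M.PosSemidef) (i : Fin n) :
    0 ≤ M i i := by
  exact hM.diag_nonneg

lemma aux_psd_col_zero {n : ℕ} {M : Matrix (Fin n) (Fin n) ℂ} (hM : M.PosSemidef) {i : Fin n}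
    (hii : M i i = 0) (j : Fin n) : M j i = 0 := by
  obtain ⟨B, rfl⟩ := CStarAlgebra.nonneg_iff_eq_star_mul_self.mp hM.nonneg
  have h : ∀ k, B k i = 0 := by
    have h2 : ∑ k, ((B k i).re * (B k i).re + (B k i).im * (B k i).im) = 0 := by
      have := congrArg Complex.re hii
      simpa [Matrix.mul_apply, Matrix.star_eq_conjTranspose] using this
    intro k
    have h3 := (Finset.sum_eq_zero_iff_of_nonneg
      (fun l _ => add_nonneg (mul_self_nonneg _) (mul_self_nonneg _))).mp h2 k
      (Finset.mem_univ k)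
    have h4 := (add_eq_zero_iff_of_nonneg (mul_self_nonneg _) (mul_self_nonneg _)).mp h3
    exact Complex.ext (mul_self_eq_zero.mp h4.1) (mul_self_eq_zero.mp h4.2)
  simp [Matrix.mul_apply, Matrix.star_eq_conjTranspose, h]

lemma aux_psd_two_sub {n : ℕ} {A : Matrix (Fin n) (Fin n) ℂ} (hA : A.IsHermitian)
    (h : ∀ i, hA.eigenvalues i ≤ 2) :
    ((2:ℂ) • (1 : Matrix (Fin n) (Fin n) ℂ) - A).PosSemidef := by
  set U : Matrix (Fin n) (Fin n) ℂ := (hA.eigenvectorUnitary : Matrix (Fin n) (Fin n) ℂ) with hUdef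
  have hU : U * star U = 1 := Matrix.mem_unitaryGroup_iff.mp hA.eigenvectorUnitary.2
  have key : (2:ℂ) • (1 : Matrix (Fin n) (Fin n) ℂ) - A =
      U * diagonal (fun i => ((2 - hA.eigenvalues i : ℝ) : ℂ)) * star U := by
    have hd : diagonal (fun i => ((2 - hA.eigenvalues i : ℝ) : ℂ)) =
        (2:ℂ) • (1 : Matrix (Fin n) (Fin n) ℂ) - diagonal (RCLike.ofReal ∘ hA.eigenvalues) := by
      ext i j
      rcases eq_or_ne i j with rfl | hij
      · simp only [Matrix.diagonal_apply_eq, Matrix.sub_apply, Matrix.smul_apply,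
          Matrix.one_apply_eq, Function.comp_apply, smul_eq_mul, mul_one]
        push_cast
        rfl
      · simp [Matrix.diagonal_apply_ne _ hij, Matrix.one_apply_ne hij]
    rw [hd, mul_sub, sub_mul]
    conv_lhs => rw [hA.spectral_theorem, Unitary.conjStarAlgAut_apply, ← hUdef]
    congr 1
    rw [mul_smul_comm, mul_one, smul_mul_assoc, hU]
  rw [key]
  exact (Matrix.posSemidef_diagonal_iff.mpr fun i =>
    Complex.zero_le_real.mpr (by linarith [h i])).mul_mul_conjTranspose_same U

lemma aux_psd_two_add {n : ℕ} {A : Matrix (Fin n) (Fin n) ℂ} (hA : A.IsHermitian)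
    (h : ∀ i, -2 ≤ hA.eigenvalues i) :
    ((2:ℂ) • (1 : Matrix (Fin n) (Fin n) ℂ) + A).PosSemidef := by
  set U : Matrix (Fin n) (Fin n) ℂ := (hA.eigenvectorUnitary : Matrix (Fin n) (Fin n) ℂ) with hUdef
  have hU : U * star U = 1 := Matrix.mem_unitaryGroup_iff.mp hA.eigenvectorUnitary.2
  have key : (2:ℂ) • (1 : Matrix (Fin n) (Fin n) ℂ) + A =
      U * diagonal (fun i => ((2 + hA.eigenvalues i : ℝ) : ℂ)) * star U := by
    have hd : diagonal (fun i => ((2 + hA.eigenvalues i : ℝ) : ℂ)) =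
        (2:ℂ) • (1 : Matrix (Fin n) (Fin n) ℂ) + diagonal (RCLike.ofReal ∘ hA.eigenvalues) := by
      ext i j
      rcases eq_or_ne i j with rfl | hij
      · simp only [Matrix.diagonal_apply_eq, Matrix.add_apply, Matrix.smul_apply,
          Matrix.one_apply_eq, Function.comp_apply, smul_eq_mul, mul_one]
        push_cast
        rfl
      · simp [Matrix.diagonal_apply_ne _ hij, Matrix.one_apply_ne hij]
    rw [hd, mul_add, add_mul]
    conv_lhs => rw [hA.spectral_theorem, Unitary.conjStarAlgAut_apply, ← hUdef]
    congr 1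
    rw [mul_smul_comm, mul_one, smul_mul_assoc, hU]
  rw [key]
  exact (Matrix.posSemidef_diagonal_iff.mpr fun i =>
    Complex.zero_le_real.mpr (by linarith [h i])).mul_mul_conjTranspose_same U

lemma aux_quadOmega_im_pos (d : ℤ) (hd : d < 0) : 0 < (quadOmega d).im := by
  have hpos : (0:ℝ) < Real.sqrt (-d) := Real.sqrt_pos.mpr (by exact_mod_cast neg_pos.mpr hd)
  have h1 : (quadOmega d).im = if d % 4 = 1 then Real.sqrt (-d) / 2 else Real.sqrt (-d) := by
    unfold quadOmega
    split <;> simp [Complex.div_im]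
  rw [h1]
  split <;> positivity

lemma aux_int_of_real_inIntRing (d : ℤ) (hd : d < 0) (x : ℂ) (hx : InIntRing d x)
    (hre : (starRingEnd ℂ) x = x) : ∃ a : ℤ, x = (a : ℂ) := by
  obtain ⟨a, b, rfl⟩ := hx
  have him := aux_quadOmega_im_pos d hd
  have h0 := congrArg Complex.im hre
  simp [Complex.conj_im] at h0
  have hb : (b:ℝ) = 0 := by
    rcases mul_eq_zero.mp (by linarith : (b:ℝ) * (quadOmega d).im = 0) with h | h
    · exact h
    · exact absurd h him.ne'
  have hb' : b = 0 := by exact_mod_cast hb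
  exact ⟨a, by simp [hb']⟩

end Aux

/-- Diagonal entries of an indecomposable cyclotomic `R`-matrix lie in `{0, 1, -1}`,
unless the matrix is the `1 × 1` matrix `(2)` or `(-2)`. -/
theorem cyclotomic_diagonal_entries
    (d : ℤ) (hd : d < 0) (hsf : Squarefree d) (hd1 : d ≠ -1) (hd3 : d ≠ -3)
    (n : ℕ) (A : Matrix (Fin n) (Fin n) ℂ) (hA : A.IsHermitian)
    (hent : ∀ i j, InIntRing d (A i j)) (hind : Indecomposable A)
    (hcyc : IsCycloMat A) :
    (∀ i, A i i ∈ ({0, 1, -1} : Set ℂ)) ∨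
      (n = 1 ∧ ((∀ i j, A i j = 2) ∨ (∀ i j, A i j = -2))) := by
  classical
  have hev : ∀ i, -2 ≤ hA.eigenvalues i ∧ hA.eigenvalues i ≤ 2 := by
    intro i
    have h1 : ((hA.eigenvalues i : ℝ) : ℂ) ∈ spectrum ℂ A := by
      simpa using spectrum.algebraMap_mem ℂ (hA.eigenvalues_mem_spectrum_real i)
    obtain ⟨t, ht, h2, h3⟩ := hcyc _ h1
    have heq : hA.eigenvalues i = t := by exact_mod_cast ht
    exact ⟨heq ▸ h2, heq ▸ h3⟩
  have hMsub := aux_psd_two_sub hA fun i => (hev i).2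
  have hMadd := aux_psd_two_add hA fun i => (hev i).1
  have hdiag : ∀ i, ∃ a : ℤ, A i i = (a : ℂ) ∧ -2 ≤ a ∧ a ≤ 2 := by
    intro i
    have hre : (starRingEnd ℂ) (A i i) = A i i := by
      have := congrFun (congrFun hA i) i
      simpa [Matrix.conjTranspose_apply] using this
    obtain ⟨a, ha⟩ := aux_int_of_real_inIntRing d hd _ (hent i i) hre
    refine ⟨a, ha, ?_, ?_⟩
    · have h0 := aux_psd_diag_nonneg hMadd i
      have he : ((2:ℂ) • (1 : Matrix (Fin n) (Fin n) ℂ) + A) i i = ((2 + a : ℝ) : ℂ) := by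
        simp [Matrix.add_apply, Matrix.smul_apply, Matrix.one_apply_eq, ha]
      rw [he] at h0
      have := Complex.zero_le_real.mp h0
      have h5 : (-2:ℝ) ≤ (a:ℝ) := by linarith
      exact_mod_cast h5
    · have h0 := aux_psd_diag_nonneg hMsub i
      have he : ((2:ℂ) • (1 : Matrix (Fin n) (Fin n) ℂ) - A) i i = ((2 - a : ℝ) : ℂ) := by
        simp [Matrix.sub_apply, Matrix.smul_apply, Matrix.one_apply_eq, ha]
      rw [he] at h0
      have := Complex.zero_le_real.mp h0
      have h5 : (a:ℝ) ≤ 2 := by linarith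
      exact_mod_cast h5
  by_cases hall : ∀ i, A i i ∈ ({0, 1, -1} : Set ℂ)
  · exact Or.inl hall
  obtain ⟨i, hi⟩ := not_forall.mp hall
  obtain ⟨a, ha, ha1, ha2⟩ := hdiag i
  have ha' : a = 2 ∨ a = -2 := by
    have h0 : a ≠ 0 := fun h => hi (by simp [ha, h])
    have h1 : a ≠ 1 := fun h => hi (by simp [ha, h])
    have h2 : a ≠ -1 := fun h => hi (by simp [ha, h])
    omega
  -- In both cases, the column of `i` vanishes off the diagonal.
  have hcol : ∀ j, j ≠ i → A j i = 0 := by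
    intro j hj
    rcases ha' with h2 | h2
    · have hMii : ((2:ℂ) • (1 : Matrix (Fin n) (Fin n) ℂ) - A) i i = 0 := by
        simp [Matrix.sub_apply, Matrix.smul_apply, Matrix.one_apply_eq, ha, h2]
      have := aux_psd_col_zero hMsub hMii j
      simpa [Matrix.sub_apply, Matrix.smul_apply, Matrix.one_apply_ne hj, neg_eq_zero] using this
    · have hMii : ((2:ℂ) • (1 : Matrix (Fin n) (Fin n) ℂ) + A) i i = 0 := by
        simp [Matrix.add_apply, Matrix.smul_apply, Matrix.one_apply_eq, ha, h2]
      have := aux_psd_col_zero hMadd hMii j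
      simpa [Matrix.add_apply, Matrix.smul_apply, Matrix.one_apply_ne hj] using this
  have hrow : ∀ j, j ≠ i → A i j = 0 := by
    intro j hj
    have := congrFun (congrFun hA i) j
    rw [Matrix.conjTranspose_apply] at this
    rw [← this, hcol j hj]
    simp
  have hn1 : n = 1 := by
    by_contra hne
    have h2n : 2 ≤ n := by have := i.pos; omega
    set j : Fin n := if (i : ℕ) = 0 then ⟨1, by omega⟩ else ⟨0, by omega⟩ with hjdef
    have hij : i ≠ j := by
      intro h
      rw [hjdef] at h
      by_cases h0 : (i : ℕ) = 0
      · rw [if_pos h0] at h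
        have : (i : ℕ) = 1 := congrArg Fin.val h
        omega
      · rw [if_neg h0] at h
        exact h0 (congrArg Fin.val h)
    obtain ⟨w⟩ := hind.preconnected i j
    obtain ⟨u, hadj, q, -⟩ :=
      SimpleGraph.Walk.not_nil_iff.mp (SimpleGraph.Walk.not_nil_of_ne (p := w) hij)
    rw [SimpleGraph.fromRel_adj] at hadj
    obtain ⟨hne', h | h⟩ := hadj
    · exact h (hrow u (Ne.symm hne'))
    · exact h (hcol u (Ne.symm hne'))
  subst hn1
  refine Or.inr ⟨rfl, ?_⟩
  rcases ha' with h2 | h2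
  · refine Or.inl fun j k => ?_
    have hj : j = i := Subsingleton.elim _ _
    have hk : k = i := Subsingleton.elim _ _
    rw [hj, hk, ha, h2]
    norm_num
  · refine Or.inr fun j k => ?_
    have hj : j = i := Subsingleton.elim _ _
    have hk : k = i := Subsingleton.elim _ _
    rw [hj, hk, ha, h2]
    norm_num
end

section
/- Let d be a squarefree negative integer with d ∉ {-1, -2, -3, -7, -11, -15}. Then every element x of O_{ℚ(√d)} with norm x·conj(x) ≤ 4 is a rational integer, so x ∈ {0, 1, −1, 2, −2}; consequently, every cyclotomic Hermitian matrix with entries in O_{ℚ(√d)} is a symmetric matrix with all entries in {0, 1, −1, 2, −2} ⊆ ℤ. -/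
open Polynomial

lemma int_case (a : ℤ) (h4 : (a : ℝ)^2 ≤ 4) : (a : ℂ) ∈ ({0, 1, -1, 2, -2} : Set ℂ) := by
  have ha : a^2 ≤ 4 := by exact_mod_cast h4
  have h1 : -2 ≤ a := by nlinarith
  have h2 : a ≤ 2 := by nlinarith
  interval_cases a <;> simp [Set.mem_insert_iff] <;> norm_num

lemma norm_le_four_mem (d : ℤ) (hd : d < 0) (hsf : Squarefree d)
    (hne : d ∉ ({-1, -2, -3, -7, -11, -15} : Set ℤ))
    (x : ℂ) (hx : InIntRing d x) (h4 : Complex.normSq x ≤ 4) :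
    x ∈ ({0, 1, -1, 2, -2} : Set ℂ) := by
  obtain ⟨a, b, rfl⟩ := hx
  simp only [Set.mem_insert_iff, Set.mem_singleton_iff] at hne
  push_neg at hne
  obtain ⟨h1, h2, h3, h7, h11, h15⟩ := hne
  have hd0 : (0:ℝ) ≤ -(d:ℝ) := by
    have : (d:ℝ) < 0 := by exact_mod_cast hd
    linarith
  have hs2 : Real.sqrt (-(d:ℝ)) ^ 2 = -(d:ℝ) := Real.sq_sqrt hd0
  set s : ℝ := Real.sqrt (-(d:ℝ)) with hs
  by_cases hb : b = 0
  · subst hb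
    simp only [Int.cast_zero, zero_mul, add_zero] at h4 ⊢
    apply int_case
    rw [Complex.normSq_apply] at h4
    simp at h4
    nlinarith [h4]
  · exfalso
    have hb2 : (1:ℝ) ≤ (b:ℝ)^2 := by
      have : 1 ≤ b^2 := by rcases lt_or_gt_of_ne hb with h | h <;> nlinarith
      exact_mod_cast this
    by_cases hmod : d % 4 = 1
    · have hd19 : d ≤ -19 := by omega
      have hd19' : (19:ℝ) ≤ -(d:ℝ) := by
        have : (d:ℝ) ≤ -19 := by exact_mod_cast hd19
        linarith
      have hform : (↑a + ↑b * quadOmega d : ℂ)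
          = (((a:ℝ) + (b:ℝ)/2 : ℝ) : ℂ) + (((b:ℝ) * s / 2 : ℝ) : ℂ) * Complex.I := by
        rw [quadOmega, if_pos hmod]
        push_cast
        ring
      rw [hform, Complex.normSq_add_mul_I] at h4
      have hq : ((b:ℝ) * s / 2)^2 = (b:ℝ)^2 * (-(d:ℝ)) / 4 := by
        rw [div_pow, mul_pow, hs2]; norm_num
      rw [hq] at h4
      nlinarith [sq_nonneg ((a:ℝ) + (b:ℝ)/2)]
    · have hnd : ¬ (2*2 ∣ d) := fun hdvd => by
        have := hsf 2 hdvd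
        rw [Int.isUnit_iff] at this
        omega
      have hd5 : d ≤ -5 := by omega
      have hd5' : (5:ℝ) ≤ -(d:ℝ) := by
        have : (d:ℝ) ≤ -5 := by exact_mod_cast hd5
        linarith
      have hform : (↑a + ↑b * quadOmega d : ℂ)
          = ((a:ℝ) : ℂ) + (((b:ℝ) * s : ℝ) : ℂ) * Complex.I := by
        rw [quadOmega, if_neg hmod]
        push_cast
        ring
      rw [hform, Complex.normSq_add_mul_I] at h4
      have hq : ((b:ℝ) * s)^2 = (b:ℝ)^2 * (-(d:ℝ)) := by
        rw [mul_pow, hs2]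
      rw [hq] at h4
      nlinarith [sq_nonneg (a:ℝ)]


lemma cyclo_eigenvalue_sq_le {n : ℕ} {A : Matrix (Fin n) (Fin n) ℂ}
    (hA : A.IsHermitian) (hc : IsCycloMat A) (k : Fin n) :
    hA.eigenvalues k ^ 2 ≤ 4 := by
  have h1 : hA.eigenvalues k ∈ spectrum ℝ A := hA.eigenvalues_mem_spectrum_real k
  have h2 : ((hA.eigenvalues k : ℂ)) ∈ spectrum ℂ A := by
    simpa using spectrum.algebraMap_mem ℂ h1
  obtain ⟨t, ht, h2t, ht2⟩ := hc _ h2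
  have h3 : hA.eigenvalues k = t := by exact_mod_cast ht
  nlinarith

lemma cyclo_entry_bound {n : ℕ} {A : Matrix (Fin n) (Fin n) ℂ}
    (hA : A.IsHermitian) (hc : IsCycloMat A) (i j : Fin n) :
    Complex.normSq (A i j) ≤ 4 := by
  classical
  set U : Matrix (Fin n) (Fin n) ℂ := (hA.eigenvectorUnitary : Matrix (Fin n) (Fin n) ℂ) with hUdef
  have hU : U * star U = 1 := Matrix.mem_unitaryGroup_iff.mp hA.eigenvectorUnitary.2
  have hU' : star U * U = 1 := Matrix.mem_unitaryGroup_iff'.mp hA.eigenvectorUnitary.2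
  set D : Matrix (Fin n) (Fin n) ℂ :=
    Matrix.diagonal (fun k => (hA.eigenvalues k : ℂ)) with hDdef
  have hspec : A = U * D * star U := by
    simpa [hUdef, hDdef, Function.comp_def] using hA.spectral_theorem
  have key : ∀ (g : Fin n → ℝ),
      ((U * Matrix.diagonal (fun k => (g k : ℂ)) * star U) i i)
        = ↑(∑ k, g k * Complex.normSq (U i k)) := by
    intro g
    rw [Matrix.mul_apply]
    push_cast
    apply Finset.sum_congr rfl
    intro k _
    rw [Matrix.mul_diagonal, Matrix.star_apply]
    rw [mul_right_comm, Complex.star_def, Complex.mul_conj, mul_comm]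
  have hAA2 : A * A = U * Matrix.diagonal (fun k => ((hA.eigenvalues k ^ 2 : ℝ) : ℂ)) * star U := by
    have hDD : D * D = Matrix.diagonal (fun k => ((hA.eigenvalues k ^ 2 : ℝ) : ℂ)) := by
      rw [hDdef, Matrix.diagonal_mul_diagonal]
      congr 1
      funext k
      push_cast
      ring
    conv_lhs => rw [hspec]
    rw [← hDD]
    simp only [Matrix.mul_assoc]
    rw [← Matrix.mul_assoc (star U) U, hU', Matrix.one_mul]
  -- diagonal entry of A * A, two ways
  have e1 : ((A * A) i i) = ↑(∑ k, Complex.normSq (A i k)) := by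
    rw [Matrix.mul_apply]
    push_cast
    apply Finset.sum_congr rfl
    intro k _
    rw [← hA.apply k i, Complex.star_def, Complex.mul_conj]
  have e2 : ((A * A) i i) = ↑(∑ k, hA.eigenvalues k ^ 2 * Complex.normSq (U i k)) := by
    rw [hAA2, key]
  have e3 : (∑ k, Complex.normSq (U i k)) = 1 := by
    have h1 := key (fun _ => (1 : ℝ))
    rw [show (Matrix.diagonal fun _ : Fin n => ((1:ℝ):ℂ)) = 1 by simp, Matrix.mul_one, hU] at h1
    simp only [Matrix.one_apply_eq, one_mul] at h1
    exact_mod_cast h1.symm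
  have e4 : (∑ k, Complex.normSq (A i k)) = ∑ k, hA.eigenvalues k ^ 2 * Complex.normSq (U i k) := by
    have := e1.symm.trans e2
    exact_mod_cast this
  have e5 : ∑ k, hA.eigenvalues k ^ 2 * Complex.normSq (U i k) ≤ 4 := by
    calc ∑ k, hA.eigenvalues k ^ 2 * Complex.normSq (U i k)
        ≤ ∑ k, 4 * Complex.normSq (U i k) := by
          apply Finset.sum_le_sum
          intro k _
          exact mul_le_mul_of_nonneg_right (cyclo_eigenvalue_sq_le hA hc k) (Complex.normSq_nonneg _)
      _ = 4 := by rw [← Finset.mul_sum, e3, mul_one]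
  have e6 : Complex.normSq (A i j) ≤ ∑ k, Complex.normSq (A i k) :=
    Finset.single_le_sum (fun k _ => Complex.normSq_nonneg (A i k)) (Finset.mem_univ j)
  linarith [e4 ▸ e6]


lemma entry_real (z : ℂ) (hz : z ∈ ({0, 1, -1, 2, -2} : Set ℂ)) : star z = z := by
  rcases hz with rfl | rfl | rfl | rfl | rfl <;> simp

/-- For squarefree negative `d ∉ {-1, -2, -3, -7, -11, -15}`, every element of the
ring of integers of `ℚ(√d)` of norm at most 4 lies in `{0, 1, -1, 2, -2}`;
consequently every cyclotomic Hermitian matrix over this ring is a symmetric matrix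
with entries in `{0, 1, -1, 2, -2}`. -/
theorem small_norm_elements_are_rational_integers
    (d : ℤ) (hd : d < 0) (hsf : Squarefree d)
    (hne : d ∉ ({-1, -2, -3, -7, -11, -15} : Set ℤ)) :
    (∀ x : ℂ, InIntRing d x → Complex.normSq x ≤ 4 →
        x ∈ ({0, 1, -1, 2, -2} : Set ℂ)) ∧
      (∀ (n : ℕ) (A : Matrix (Fin n) (Fin n) ℂ), A.IsHermitian →
        (∀ i j, InIntRing d (A i j)) → IsCycloMat A →
        A.transpose = A ∧ ∀ i j, A i j ∈ ({0, 1, -1, 2, -2} : Set ℂ)) := by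
  have part1 := norm_le_four_mem d hd hsf hne
  refine ⟨part1, fun n A hA hint hcyc => ?_⟩
  have hmem : ∀ i j, A i j ∈ ({0, 1, -1, 2, -2} : Set ℂ) := fun i j =>
    part1 _ (hint i j) (cyclo_entry_bound hA hcyc i j)
  refine ⟨?_, hmem⟩
  ext i j
  rw [Matrix.transpose_apply, ← hA.apply i j, entry_real _ (hmem j i)]
end

section
/- Let d be a squarefree negative integer with d ≠ -1 and d ≠ -3. If A is a cyclotomic R-matrix over O_{ℚ(√d)}, then for every index i one has Σ_j |A_{ij}|² ≤ 4, where the sum is over all indices j (including j = i); in graph language, every vertex of a cyclotomic L-graph has weighted degree at most 4. -/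
open Polynomial

/-- Every vertex of a cyclotomic `L`-graph has weighted degree at most 4: for a
cyclotomic `R`-matrix, each row has `∑ⱼ |A_{ij}|² ≤ 4`. -/
theorem cyclotomic_weighted_degree_bound
    (d : ℤ) (hd : d < 0) (hsf : Squarefree d) (hd1 : d ≠ -1) (hd3 : d ≠ -3)
    (n : ℕ) (A : Matrix (Fin n) (Fin n) ℂ) (hA : A.IsHermitian)
    (hent : ∀ i j, InIntRing d (A i j)) (hcyc : IsCycloMat A) :
    ∀ i, ∑ j, Complex.normSq (A i j) ≤ 4 := by
  intro i
  classical
  set U : Matrix (Fin n) (Fin n) ℂ := (hA.eigenvectorUnitary : Matrix (Fin n) (Fin n) ℂ) with hU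
  have hUU : U * star U = 1 := (Matrix.mem_unitaryGroup_iff).mp hA.eigenvectorUnitary.2
  have hUU' : star U * U = 1 := (Matrix.mem_unitaryGroup_iff').mp hA.eigenvectorUnitary.2
  have hUrow : ∑ k, Complex.normSq (U i k) = 1 := by
    have h1 : (U * star U) i i = 1 := by rw [hUU]; simp
    have h2 : (U * star U) i i = ∑ k, (Complex.normSq (U i k) : ℂ) := by
      simp [Matrix.mul_apply, Matrix.star_apply, Complex.mul_conj]
    have h3 := h1.symm.trans h2
    exact_mod_cast h3.symm
  have hev : ∀ k, (hA.eigenvalues k) ^ 2 ≤ 4 := by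
    intro k
    have h1 : ((hA.eigenvalues k : ℝ) : ℂ) ∈ spectrum ℂ A := by
      simpa using spectrum.algebraMap_mem ℂ (hA.eigenvalues_mem_spectrum_real k)
    obtain ⟨t, ht, ht1, ht2⟩ := hcyc _ h1
    have heq : hA.eigenvalues k = t := by exact_mod_cast ht
    rw [heq]; nlinarith
  have hspec := hA.spectral_theorem
  rw [Unitary.conjStarAlgAut_apply] at hspec
  have hAA : A * A = U * Matrix.diagonal (fun k => ((hA.eigenvalues k : ℂ)) ^ 2) * star U := by
    calc A * A
        = (U * Matrix.diagonal (RCLike.ofReal ∘ hA.eigenvalues) * star U)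
          * (U * Matrix.diagonal (RCLike.ofReal ∘ hA.eigenvalues) * star U) := by
          rw [← hspec]
      _ = U * (Matrix.diagonal (RCLike.ofReal ∘ hA.eigenvalues)
            * Matrix.diagonal (RCLike.ofReal ∘ hA.eigenvalues)) * star U := by
          simp only [Matrix.mul_assoc]
          rw [← Matrix.mul_assoc (star U) U, hUU', Matrix.one_mul]
      _ = U * Matrix.diagonal (fun k => ((hA.eigenvalues k : ℂ)) ^ 2) * star U := by
          rw [Matrix.diagonal_mul_diagonal]
          congr 2
          funext k
          simp [sq]
  have hdiag : (A * A) i i = ∑ k, ((hA.eigenvalues k : ℂ)) ^ 2 * Complex.normSq (U i k) := by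
    rw [hAA, Matrix.mul_apply]
    refine Finset.sum_congr rfl fun k _ => ?_
    rw [Matrix.mul_diagonal, Matrix.star_apply]
    rw [mul_comm (U i k), mul_assoc]
    simp [Complex.mul_conj]
  have hAA2 : (A * A) i i = ((∑ j, Complex.normSq (A i j) : ℝ) : ℂ) := by
    rw [Matrix.mul_apply]
    push_cast
    refine Finset.sum_congr rfl fun j _ => ?_
    rw [← hA.apply j i]
    simp [Complex.mul_conj]
  have hreal : ∑ j, Complex.normSq (A i j)
      = ∑ k, (hA.eigenvalues k) ^ 2 * Complex.normSq (U i k) := by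
    have := hAA2.symm.trans hdiag
    push_cast at this
    exact_mod_cast this
  rw [hreal]
  calc ∑ k, (hA.eigenvalues k) ^ 2 * Complex.normSq (U i k)
      ≤ ∑ k, 4 * Complex.normSq (U i k) := by
        refine Finset.sum_le_sum fun k _ => ?_
        exact mul_le_mul_of_nonneg_right (hev k) (Complex.normSq_nonneg _)
    _ = 4 := by rw [← Finset.mul_sum, hUrow, mul_one]
end

section
/- Let d be a squarefree negative integer with d ≠ -1 and d ≠ -3. If A is an R-matrix over O_{ℚ(√d)} having a diagonal entry A_{ii} with |A_{ii}| ≥ 3, then M(A) > 1.3 (indeed M(A) ≥ (3 + √5)/2 = 2.618...). -/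
open Polynomial

section AuxLemmas
open Matrix

lemma my_charpoly_eval {n : ℕ} (A : Matrix (Fin n) (Fin n) ℂ) (r : ℂ) :
    A.charpoly.eval r = (r • (1 : Matrix (Fin n) (Fin n) ℂ) - A).det := by
  rw [Matrix.charpoly, ← Polynomial.coe_evalRingHom, RingHom.map_det]
  congr 1
  ext i j
  by_cases h : i = j
  · subst h; simp [Matrix.charmatrix_apply_eq, Matrix.one_apply]
  · simp [Matrix.charmatrix_apply_ne _ _ _ h, Matrix.one_apply, h]

lemma eig_root {n : ℕ} {A : Matrix (Fin n) (Fin n) ℂ} (hA : A.IsHermitian) (k : Fin n) :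
    A.charpoly.eval ((hA.eigenvalues k : ℝ) : ℂ) = 0 := by
  classical
  set U : Matrix (Fin n) (Fin n) ℂ := (hA.eigenvectorUnitary : Matrix (Fin n) (Fin n) ℂ)
  set D : Matrix (Fin n) (Fin n) ℂ := Matrix.diagonal (RCLike.ofReal ∘ hA.eigenvalues)
  have hU : U * star U = 1 := Matrix.mem_unitaryGroup_iff.mp (hA.eigenvectorUnitary).2
  set r : ℂ := ((hA.eigenvalues k : ℝ) : ℂ)
  have key : r • (1 : Matrix (Fin n) (Fin n) ℂ) - A = U * (r • 1 - D) * star U := by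
    have h1 : U * (r • 1 - D) * star U = r • (U * star U) - U * D * star U := by
      rw [Matrix.mul_sub, Matrix.sub_mul, Matrix.mul_smul, Matrix.smul_mul, mul_one]
    rw [h1, hU]
    conv_lhs => rw [hA.spectral_theorem, Unitary.conjStarAlgAut_apply]
  rw [my_charpoly_eval, key, Matrix.det_mul, Matrix.det_mul]
  have h2 : (r • (1 : Matrix (Fin n) (Fin n) ℂ) - D) = Matrix.diagonal (fun j => r - (hA.eigenvalues j : ℂ)) := by
    rw [Matrix.smul_one_eq_diagonal, ← Matrix.diagonal_sub]
    rfl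
  rw [h2, Matrix.det_diagonal]
  have : ∏ j, (r - (hA.eigenvalues j : ℂ)) = 0 :=
    Finset.prod_eq_zero (Finset.mem_univ k) (by simp [r])
  rw [this, mul_zero, zero_mul]

lemma diag_bound {n : ℕ} {A : Matrix (Fin n) (Fin n) ℂ} (hA : A.IsHermitian) (i : Fin n)
    (hn : (Finset.univ : Finset (Fin n)).Nonempty) :
    ‖A i i‖ ≤ Finset.univ.sup' hn (fun k => |hA.eigenvalues k|) := by
  classical
  set U : Matrix (Fin n) (Fin n) ℂ := (hA.eigenvectorUnitary : Matrix (Fin n) (Fin n) ℂ)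
  have hU : U * star U = 1 := Matrix.mem_unitaryGroup_iff.mp (hA.eigenvectorUnitary).2
  set M : ℝ := Finset.univ.sup' hn (fun k => |hA.eigenvalues k|)
  have hMk : ∀ k, |hA.eigenvalues k| ≤ M := fun k => Finset.le_sup' (fun k => |hA.eigenvalues k|) (Finset.mem_univ k)
  have hrow : ∑ k, Complex.normSq (U i k) = 1 := by
    have h1 : (U * star U) i i = 1 := by rw [hU]; simp [Matrix.one_apply]
    rw [Matrix.mul_apply] at h1
    have h2 : ∑ k, ((Complex.normSq (U i k) : ℝ) : ℂ) = 1 := by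
      rw [← h1]
      refine Finset.sum_congr rfl fun k _ => ?_
      rw [Matrix.star_apply, ← Complex.mul_conj]
      rfl
    have := congrArg Complex.re h2
    simpa [Complex.ofReal_sum] using this
  have hent : A i i = ∑ k, U i k * (hA.eigenvalues k : ℂ) * (starRingEnd ℂ) (U i k) := by
    conv_lhs => rw [hA.spectral_theorem, Unitary.conjStarAlgAut_apply]
    rw [Matrix.mul_apply]
    refine Finset.sum_congr rfl fun k _ => ?_
    rw [Matrix.mul_diagonal, Matrix.star_apply]
    rfl
  calc ‖A i i‖
      ≤ ∑ k, ‖(U i k * (hA.eigenvalues k : ℂ) * (starRingEnd ℂ) (U i k))‖ := by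
        rw [hent]; exact norm_sum_le _ _
    _ = ∑ k, Complex.normSq (U i k) * |hA.eigenvalues k| := by
        refine Finset.sum_congr rfl fun k _ => ?_
        rw [norm_mul, norm_mul, Complex.norm_real, Real.norm_eq_abs, Complex.norm_conj,
          ← Complex.sq_norm]
        ring
    _ ≤ ∑ k, Complex.normSq (U i k) * M := by
        refine Finset.sum_le_sum fun k _ => ?_
        exact mul_le_mul_of_nonneg_left (hMk k) (Complex.normSq_nonneg _)
    _ = M := by rw [← Finset.sum_mul, hrow, one_mul]

lemma exists_z_pos (μ : ℝ) (h : 3 ≤ μ) :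
    ∃ z : ℝ, (3 + Real.sqrt 5) / 2 ≤ |z| ∧ z ^ 2 = μ * z - 1 := by
  have h4 : (0:ℝ) ≤ μ ^ 2 - 4 := by nlinarith
  set s := Real.sqrt (μ ^ 2 - 4) with hs
  have hs2 : s ^ 2 = μ ^ 2 - 4 := Real.sq_sqrt h4
  have hs5 : Real.sqrt 5 ≤ s := Real.sqrt_le_sqrt (by nlinarith)
  have hsnn : 0 ≤ s := Real.sqrt_nonneg _
  refine ⟨(μ + s) / 2, ?_, by nlinarith⟩
  rw [abs_of_nonneg (by linarith)]
  linarith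

lemma exists_z (μ : ℝ) (h : 3 ≤ |μ|) :
    ∃ z : ℝ, (3 + Real.sqrt 5) / 2 ≤ |z| ∧ z ^ 2 = μ * z - 1 := by
  rcases le_or_gt 0 μ with hμ | hμ
  · exact exists_z_pos μ (by rwa [abs_of_nonneg hμ] at h)
  · obtain ⟨z, hz1, hz2⟩ := exists_z_pos (-μ) (by rwa [abs_of_neg hμ] at h)
    exact ⟨-z, by simpa using hz1, by nlinarith⟩

lemma one_le_mprod (s : Multiset ℝ) (h : ∀ x ∈ s, 1 ≤ x) : 1 ≤ s.prod := by
  induction s using Multiset.induction with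
  | empty => simp
  | cons a t ih =>
    rw [Multiset.prod_cons]
    have ha := h a (Multiset.mem_cons_self a t)
    have ht := ih fun x hx => h x (Multiset.mem_cons_of_mem hx)
    nlinarith

lemma assocRecip_ne_zero (n : ℕ) (g : Polynomial ℂ) (hm : g.Monic) (hdeg : g.natDegree = n) :
    assocRecip n g ≠ 0 := by
  have hc : (assocRecip n g).coeff (2 * n) = 1 := by
    rw [assocRecip, Polynomial.finset_sum_coeff]
    rw [Finset.sum_eq_single n]
    · have hgn : g.coeff n = 1 := by
        rw [← hdeg]; exact hm
      rw [hgn, Nat.sub_self, pow_zero, _root_.map_one, one_mul, one_mul]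
      have hmon : ((X:ℂ[X]) ^ 2 + 1).Monic := by
        have := Polynomial.monic_X_pow_add_C (R := ℂ) (1:ℂ) (two_ne_zero)
        simpa using this
      have hnd : (((X:ℂ[X]) ^ 2 + 1) ^ n).natDegree = 2 * n := by
        rw [hmon.natDegree_pow]
        have : ((X:ℂ[X]) ^ 2 + 1).natDegree = 2 := by
          have := Polynomial.natDegree_X_pow_add_C (R := ℂ) (n := 2) (r := (1:ℂ))
          simpa using this
        rw [this]; ring
      have := (hmon.pow n).coeff_natDegree
      rwa [hnd] at this
    · intro k hk hkn
      apply Polynomial.coeff_eq_zero_of_natDegree_lt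
      have hkn' : k < n := by
        have := Finset.mem_range.mp hk
        omega
      have h2 : (Polynomial.C (g.coeff k) * X ^ (n - k)).natDegree ≤ n - k := by
        refine le_trans (Polynomial.natDegree_mul_le) ?_
        simp [Polynomial.natDegree_X_pow]
      have h3 : (((X:ℂ[X]) ^ 2 + 1) ^ k).natDegree ≤ 2 * k := by
        refine le_trans (Polynomial.natDegree_pow_le) ?_
        have : ((X:ℂ[X]) ^ 2 + 1).natDegree ≤ 2 := by
          refine le_trans (Polynomial.natDegree_add_le _ _) ?_
          simp
        nlinarith
      calc (Polynomial.C (g.coeff k) * X ^ (n - k) * ((X:ℂ[X]) ^ 2 + 1) ^ k).natDegree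
          ≤ (Polynomial.C (g.coeff k) * X ^ (n - k)).natDegree
              + (((X:ℂ[X]) ^ 2 + 1) ^ k).natDegree := Polynomial.natDegree_mul_le
        _ ≤ (n - k) + 2 * k := add_le_add h2 h3
        _ < 2 * n := by omega
    · intro h; exact absurd (Finset.self_mem_range_succ n) h
  intro h0
  rw [h0] at hc
  simp at hc

lemma assocRecip_root (n : ℕ) (g : Polynomial ℂ) (hdeg : g.natDegree = n)
    (μ : ℝ) (hroot : g.eval ((μ:ℝ):ℂ) = 0) (z : ℝ) (hz : z ^ 2 = μ * z - 1) (hzne : (z:ℂ) ≠ 0) :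
    (assocRecip n g).eval ((z:ℝ):ℂ) = 0 := by
  have hzc : ((z:ℂ)) ^ 2 + 1 = (μ:ℂ) * z := by
    have h := congrArg (Complex.ofReal) hz
    push_cast at h
    rw [h]; ring
  rw [assocRecip, Polynomial.eval_finset_sum]
  have hterm : ∀ k ∈ Finset.range (n + 1),
      (Polynomial.C (g.coeff k) * X ^ (n - k) * ((X:ℂ[X]) ^ 2 + 1) ^ k).eval (z:ℂ)
        = g.coeff k * (μ:ℂ) ^ k * (z:ℂ) ^ n := by
    intro k hk
    have hkn : k ≤ n := Nat.lt_succ_iff.mp (Finset.mem_range.mp hk)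
    simp only [Polynomial.eval_mul, Polynomial.eval_pow, Polynomial.eval_C, Polynomial.eval_X,
      Polynomial.eval_add, Polynomial.eval_one]
    rw [hzc, mul_pow]
    rw [mul_assoc, mul_comm ((z:ℂ) ^ (n-k)), mul_assoc, ← pow_add]
    rw [Nat.add_sub_cancel' hkn]
    ring
  rw [Finset.sum_congr rfl hterm, ← Finset.sum_mul]
  have : ∑ k ∈ Finset.range (n + 1), g.coeff k * (μ:ℂ) ^ k = g.eval (μ:ℂ) := by
    rw [Polynomial.eval_eq_sum_range' (by omega : g.natDegree < n + 1)]
  rw [this, hroot, zero_mul]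

end AuxLemmas

/-- An `R`-matrix with a diagonal entry of modulus at least 3 has Mahler measure
greater than 1.3; indeed at least `(3 + √5)/2 = 2.618...`. -/
theorem large_diagonal_entry_mahler_bound
    (d : ℤ) (hd : d < 0) (hsf : Squarefree d) (hd1 : d ≠ -1) (hd3 : d ≠ -3)
    (n : ℕ) (A : Matrix (Fin n) (Fin n) ℂ) (hA : A.IsHermitian)
    (hent : ∀ i j, InIntRing d (A i j))
    (i : Fin n) (hi : 3 ≤ ‖A i i‖) :
    1.3 < mahlerMat A ∧ (3 + Real.sqrt 5) / 2 ≤ mahlerMat A := by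
  classical
  have hne : (Finset.univ : Finset (Fin n)).Nonempty := ⟨i, Finset.mem_univ i⟩
  obtain ⟨k, -, hk⟩ := Finset.exists_mem_eq_sup' hne (fun k => |hA.eigenvalues k|)
  have hμ : 3 ≤ |hA.eigenvalues k| := by
    have hb := diag_bound hA i hne
    rw [hk] at hb
    exact le_trans hi hb
  have hroot : A.charpoly.eval ((hA.eigenvalues k : ℝ) : ℂ) = 0 := eig_root hA k
  obtain ⟨z, hz1, hz2⟩ := exists_z (hA.eigenvalues k) hμ
  have h5 : (2:ℝ) ≤ Real.sqrt 5 := by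
    nlinarith [Real.sq_sqrt (show (0:ℝ) ≤ 5 by norm_num), Real.sqrt_nonneg 5]
  have hzne : (z:ℂ) ≠ 0 := by
    rw [Complex.ofReal_ne_zero]
    intro h0
    rw [h0] at hz1
    simp at hz1
    linarith
  have hdeg : A.charpoly.natDegree = n := by
    rw [Matrix.charpoly_natDegree_eq_dim, Fintype.card_fin]
  have hP0 : assocRecip n A.charpoly ≠ 0 :=
    assocRecip_ne_zero n A.charpoly (A.charpoly_monic) hdeg
  have hProot : (assocRecip n A.charpoly).eval ((z:ℝ):ℂ) = 0 :=
    assocRecip_root n A.charpoly hdeg (hA.eigenvalues k) hroot z hz2 hzne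
  have hzmem : ((z:ℝ):ℂ) ∈ (assocRecip n A.charpoly).roots :=
    Polynomial.mem_roots'.mpr ⟨hP0, hProot⟩
  obtain ⟨t, ht⟩ := Multiset.exists_cons_of_mem hzmem
  have key : (3 + Real.sqrt 5) / 2 ≤ mahlerMat A := by
    show (3 + Real.sqrt 5) / 2 ≤ mahlerMeasurePoly (assocRecip n A.charpoly)
    unfold mahlerMeasurePoly
    rw [ht, Multiset.map_cons, Multiset.prod_cons]
    have h1 : 1 ≤ ((t.map fun w => max 1 ‖w‖).prod) := by
      refine one_le_mprod _ fun x hx => ?_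
      obtain ⟨w, -, rfl⟩ := Multiset.mem_map.mp hx
      exact le_max_left _ _
    have h2 : (3 + Real.sqrt 5) / 2 ≤ max 1 ‖((z:ℝ):ℂ)‖ := by
      rw [Complex.norm_real, Real.norm_eq_abs]
      exact le_trans hz1 (le_max_right _ _)
    calc (3 + Real.sqrt 5) / 2 ≤ max 1 ‖((z:ℝ):ℂ)‖ := h2
      _ ≤ max 1 ‖((z:ℝ):ℂ)‖ * (t.map fun w => max 1 ‖w‖).prod :=
          le_mul_of_one_le_right (le_trans zero_le_one (le_max_left _ _)) h1
  refine ⟨?_, key⟩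
  have : (1.3:ℝ) < (3 + Real.sqrt 5) / 2 := by linarith
  linarith
end

section
/- Let d = -2 or d = -7. If A is a minimal noncyclotomic L'-matrix over O_{ℚ(√d)} with at least seven rows, then for every index i one has Σ_j |A_{ij}|² ≤ 4 (sum over all indices j, including j = i); in graph language, every vertex of such a graph has weighted degree at most 4. -/
open Polynomial

lemma cyclo_row_bound {m : ℕ} (B : Matrix (Fin m) (Fin m) ℂ) (hB : B.IsHermitian)
    (hc : IsCycloMat B) (i : Fin m) : ∑ j, Complex.normSq (B i j) ≤ 4 := by
  classical
  set U : Matrix (Fin m) (Fin m) ℂ := (hB.eigenvectorUnitary : Matrix (Fin m) (Fin m) ℂ) with hU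
  set lam := hB.eigenvalues with hlam
  have hlb : ∀ k, lam k ^ 2 ≤ 4 := by
    intro k
    have hmem : ((lam k : ℝ) : ℂ) ∈ spectrum ℂ B := by
      have := hB.eigenvalues_mem_spectrum_real k
      simpa using spectrum.algebraMap_mem ℂ this
    obtain ⟨t, ht, h1, h2⟩ := hc _ hmem
    have : lam k = t := by exact_mod_cast ht
    nlinarith [this]
  -- B * B as diagonalized
  have h1 : star U * U = 1 := Unitary.coe_star_mul_self hB.eigenvectorUnitary
  have h2 : U * star U = 1 := Unitary.coe_mul_star_self hB.eigenvectorUnitary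
  have hBB : B * B = U * Matrix.diagonal (fun k => ((lam k : ℂ))^2) * star U := by
    conv_lhs => rw [hB.spectral_theorem, Unitary.conjStarAlgAut_apply]
    simp only [Matrix.mul_assoc]
    rw [← Matrix.mul_assoc (star U) U, h1, Matrix.one_mul,
      ← Matrix.mul_assoc (Matrix.diagonal _) (Matrix.diagonal _),
      Matrix.diagonal_mul_diagonal]
    have hd : (fun k => (RCLike.ofReal ∘ hB.eigenvalues) k * (RCLike.ofReal ∘ hB.eigenvalues) k)
        = fun k => ((lam k : ℂ))^2 := by
      ext k; simp [pow_two, hlam]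
    rw [hd]
  -- entrywise
  have hLHS : (B * B) i i = ((∑ j, Complex.normSq (B i j) : ℝ) : ℂ) := by
    rw [Matrix.mul_apply]
    push_cast
    refine Finset.sum_congr rfl fun j _ => ?_
    have : B j i = starRingEnd ℂ (B i j) := by
      conv_lhs => rw [← hB]
      simp [Matrix.conjTranspose_apply]
    rw [this, Complex.mul_conj]
  have hRHS : (B * B) i i = ((∑ k, lam k ^ 2 * Complex.normSq (U i k) : ℝ) : ℂ) := by
    rw [hBB, Matrix.mul_apply]
    push_cast
    refine Finset.sum_congr rfl fun k _ => ?_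
    rw [Matrix.mul_diagonal]
    have : (star U) k i = starRingEnd ℂ (U i k) := by
      simp [Matrix.star_eq_conjTranspose, Matrix.conjTranspose_apply]
    rw [this]
    rw [mul_comm (U i k) _, mul_assoc, Complex.mul_conj]
  have hUrow : ∑ k, Complex.normSq (U i k) = 1 := by
    have := congrArg (fun M => M i i) h2
    simp only [Matrix.mul_apply, Matrix.one_apply_eq] at this
    have : ((∑ k, Complex.normSq (U i k) : ℝ) : ℂ) = 1 := by
      rw [← this]
      push_cast
      refine Finset.sum_congr rfl fun k _ => ?_
      have : (star U) k i = starRingEnd ℂ (U i k) := by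
        simp [Matrix.star_eq_conjTranspose, Matrix.conjTranspose_apply]
      rw [this, Complex.mul_conj]
    exact_mod_cast this
  have heq : ∑ j, Complex.normSq (B i j) = ∑ k, lam k ^ 2 * Complex.normSq (U i k) := by
    have := hLHS.symm.trans hRHS
    exact_mod_cast this
  rw [heq]
  calc ∑ k, lam k ^ 2 * Complex.normSq (U i k)
      ≤ ∑ k, 4 * Complex.normSq (U i k) := by
        refine Finset.sum_le_sum fun k _ => ?_
        exact mul_le_mul_of_nonneg_right (hlb k) (Complex.normSq_nonneg _)
    _ = 4 := by rw [← Finset.mul_sum, hUrow, mul_one]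

lemma quad_normSq_ge_one (d : ℤ) (hd : d = -2 ∨ d = -7) {x : ℂ}
    (hx : InIntRing d x) (hx0 : x ≠ 0) : 1 ≤ Complex.normSq x := by
  obtain ⟨a, b, rfl⟩ := hx
  have hab : ¬ (a = 0 ∧ b = 0) := by
    rintro ⟨rfl, rfl⟩; simp at hx0
  have hb2 : b ≠ 0 → (1:ℤ) ≤ b^2 := fun hb => by nlinarith [Int.one_le_abs hb, sq_abs b]
  have ha2 : a ≠ 0 → (1:ℤ) ≤ a^2 := fun ha => by nlinarith [Int.one_le_abs ha, sq_abs a]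
  rcases hd with rfl | rfl
  · have hω : quadOmega (-2) = Complex.I * Real.sqrt 2 := by
      rw [quadOmega]; norm_num
    rw [hω]
    have h2 : Real.sqrt 2 ^ 2 = 2 := Real.sq_sqrt (by norm_num)
    have hkey : (1:ℤ) ≤ a^2 + 2*b^2 := by
      rcases eq_or_ne a 0 with rfl | ha
      · have := hb2 (by tauto); nlinarith
      · have := ha2 ha; nlinarith [sq_nonneg b]
    have hre : ((a:ℂ) + (b:ℂ) * (Complex.I * (Real.sqrt 2 : ℝ))).re = a := by simp
    have him : ((a:ℂ) + (b:ℂ) * (Complex.I * (Real.sqrt 2 : ℝ))).im = b * Real.sqrt 2 := by simp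
    rw [Complex.normSq_apply, hre, him]
    have : ((1:ℤ):ℝ) ≤ ((a^2 + 2*b^2 : ℤ) : ℝ) := by exact_mod_cast hkey
    push_cast at this ⊢
    nlinarith [this, h2]
  · have hω : quadOmega (-7) = (1 + Complex.I * Real.sqrt 7) / 2 := by
      rw [quadOmega]; norm_num
    rw [hω]
    have h7 : Real.sqrt 7 ^ 2 = 7 := Real.sq_sqrt (by norm_num)
    have hkey : (1:ℤ) ≤ a^2 + a*b + 2*b^2 := by
      rcases eq_or_ne b 0 with rfl | hb
      · have := ha2 (by tauto); nlinarith
      · have := hb2 hb; nlinarith [sq_nonneg (2*a + b)]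
    have hre : ((a:ℂ) + (b:ℂ) * ((1 + Complex.I * (Real.sqrt 7 : ℝ)) / 2)).re
        = a + b / 2 := by
      simp [Complex.add_re, Complex.div_re, Complex.normSq]
      ring
    have him : ((a:ℂ) + (b:ℂ) * ((1 + Complex.I * (Real.sqrt 7 : ℝ)) / 2)).im
        = b * Real.sqrt 7 / 2 := by
      simp [Complex.add_im, Complex.div_im, Complex.normSq]
      ring
    rw [Complex.normSq_apply, hre, him]
    have : ((1:ℤ):ℝ) ≤ ((a^2 + a*b + 2*b^2 : ℤ) : ℝ) := by exact_mod_cast hkey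
    push_cast at this ⊢
    nlinarith [this, h7]

/-- A minimal noncyclotomic `L'`-matrix with at least seven rows has all rows of
weighted degree at most 4. -/
theorem minimal_noncyclotomic_weighted_degree_bound
    (d : ℤ) (hd : d = -2 ∨ d = -7)
    (n : ℕ) (hn : 7 ≤ n) (A : Matrix (Fin n) (Fin n) ℂ)
    (hLp : IsLpMat d A) (hmin : MinimalNoncyclotomic A) :
    ∀ i, ∑ j, Complex.normSq (A i j) ≤ 4 := by
  intro i
  obtain ⟨hHerm, hent, hdiag, hoff⟩ := hLp
  obtain ⟨hind, hnc, hsub⟩ := hmin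
  obtain ⟨m, rfl⟩ : ∃ m, n = m + 1 := ⟨n - 1, by omega⟩
  have key : ∀ j : Fin (m+1), j ≠ i →
      ∑ k : Fin m, Complex.normSq (A i (j.succAbove k)) ≤ 4 := by
    intro j hj
    have hcyc : IsCycloMat (A.submatrix j.succAboveEmb j.succAboveEmb) :=
      hsub m (by omega) j.succAboveEmb
    have hherm : (A.submatrix (j.succAboveEmb : Fin m → Fin (m+1))
        (j.succAboveEmb : Fin m → Fin (m+1))).IsHermitian := hHerm.submatrix _
    obtain ⟨i', hi'⟩ := Fin.exists_succAbove_eq hj.symm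
    have hrow := cyclo_row_bound _ hherm hcyc i'
    simpa [Matrix.submatrix_apply, Fin.succAboveEmb, hi'] using hrow
  by_cases hzero : ∃ j, j ≠ i ∧ A i j = 0
  · obtain ⟨j, hj, hj0⟩ := hzero
    have hs := key j hj
    rw [Fin.sum_univ_succAbove (fun k => Complex.normSq (A i k)) j]
    simpa [hj0] using hs
  · exfalso
    push_neg at hzero
    have hne : ∃ j : Fin (m+1), j ≠ i := by
      refine ⟨if i = 0 then 1 else 0, ?_⟩
      split <;> simp_all <;> omega
    obtain ⟨j₁, hj₁⟩ := hne
    obtain ⟨j₀, hj₀mem, hj₀min⟩ := Finset.exists_min_image (Finset.univ.erase i)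
      (fun j => Complex.normSq (A i j)) ⟨j₁, Finset.mem_erase.2 ⟨hj₁, Finset.mem_univ _⟩⟩
    have hj₀ne : j₀ ≠ i := (Finset.mem_erase.1 hj₀mem).1
    have hm₀1 : 1 ≤ Complex.normSq (A i j₀) :=
      quad_normSq_ge_one d hd (hent i j₀) (hzero j₀ hj₀ne)
    have hs := key j₀ hj₀ne
    obtain ⟨i', hi'⟩ := Fin.exists_succAbove_eq hj₀ne.symm
    -- lower bound the sum
    have hterm : ∀ k ∈ Finset.univ.erase i',
        Complex.normSq (A i j₀) ≤ Complex.normSq (A i (j₀.succAbove k)) := by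
      intro k hk
      have hki' : k ≠ i' := (Finset.mem_erase.1 hk).1
      have hne' : j₀.succAbove k ≠ i := by
        rw [← hi']
        exact fun h => hki' (j₀.succAbove_right_injective h)
      exact hj₀min _ (Finset.mem_erase.2 ⟨hne', Finset.mem_univ _⟩)
    have hsum1 : ∑ k ∈ Finset.univ.erase i', Complex.normSq (A i (j₀.succAbove k))
        ≤ ∑ k : Fin m, Complex.normSq (A i (j₀.succAbove k)) :=
      Finset.sum_le_sum_of_subset_of_nonneg (Finset.subset_univ _)
        (fun k _ _ => Complex.normSq_nonneg _)
    have hsum2 : (Finset.univ.erase i').card • Complex.normSq (A i j₀)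
        ≤ ∑ k ∈ Finset.univ.erase i', Complex.normSq (A i (j₀.succAbove k)) :=
      Finset.card_nsmul_le_sum _ _ _ hterm
    have hcard : (Finset.univ.erase i').card = m - 1 := by
      rw [Finset.card_erase_of_mem (Finset.mem_univ _)]
      simp
    have hm6 : 6 ≤ m := by omega
    have hcard5 : (5:ℝ) ≤ ((Finset.univ.erase i').card : ℝ) := by
      rw [hcard]; exact_mod_cast (by omega : 5 ≤ m - 1)
    rw [nsmul_eq_mul] at hsum2
    nlinarith [hsum1, hsum2, hs, hm₀1, hcard5]
end
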